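/- A normal Cayley graph of a nonabelian simple group has no pair of distinct strongly cospectral vertices. -/

import Mathlib

open Matrix

/-- `E` is the orthogonal projection onto the eigenspace of `A` for the eigenvalue `μ`. -/
def IsEigenProjection {V : Type*} [Fintype V] (A : Matrix V V ℝ) (μ : ℝ)
    (E : Matrix V V ℝ) : Prop :=
  E * E = E ∧ E.IsSymm ∧
    (∀ x : V → ℝ, A.mulVec (E.mulVec x) = μ • E.mulVec x) ∧
    (∀ y : V → ℝ, A.mulVec y = μ • y → E.mulVec y = y)

/-- Vertices `u` and `v` are strongly cospectral: `E e_u = ± E e_v` for every spectral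
idempotent `E` of `A`. -/
def StronglyCospectral {V : Type*} [Fintype V] [DecidableEq V]
    (A : Matrix V V ℝ) (u v : V) : Prop :=
  ∀ (μ : ℝ) (E : Matrix V V ℝ), IsEigenProjection A μ E →
    E.mulVec (Pi.single u 1) = E.mulVec (Pi.single v 1) ∨
    E.mulVec (Pi.single u 1) = -E.mulVec (Pi.single v 1)

/-- The adjacency matrix of the Cayley graph `X(G, C)`: `g ~ h` iff `h * g⁻¹ ∈ C`. -/
def cayleyAdj {G : Type*} [Group G] [Fintype G] [DecidableEq G] (C : Finset G) :
    Matrix G G ℝ :=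
  Matrix.of fun g h => if h * g⁻¹ ∈ C then 1 else 0

set_option linter.unusedSectionVars false

lemma exists_eigenProjection_ne_zero {n : Type*} [Fintype n] [DecidableEq n]
    {A : Matrix n n ℝ} (hA : A.IsHermitian) {w : n → ℝ} (hw : w ≠ 0) :
    ∃ μ E, IsEigenProjection A μ E ∧ E.mulVec w ≠ 0 := by
  classical
  set U : Matrix n n ℝ := (hA.eigenvectorUnitary : Matrix n n ℝ) with hUdef
  have h1 : U * star U = 1 := mem_unitaryGroup_iff.mp hA.eigenvectorUnitary.2
  have h2 : star U * U = 1 := mem_unitaryGroup_iff'.mp hA.eigenvectorUnitary.2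
  set d : n → ℝ := hA.eigenvalues with hddef
  have hspec : A = U * diagonal d * star U := by
    have := hA.spectral_theorem
    simpa [RCLike.ofReal_real_eq_id] using this
  set z : n → ℝ := (star U).mulVec w with hzdef
  have hUz : U.mulVec z = w := by
    rw [hzdef, mulVec_mulVec, h1, one_mulVec]
  have hz : z ≠ 0 := fun h => hw (by rw [← hUz, h, mulVec_zero])
  obtain ⟨i, hzi⟩ := Function.ne_iff.mp hz
  have hzi : z i ≠ 0 := by simpa using hzi
  set P : Matrix n n ℝ := diagonal (fun j => if d j = d i then (1:ℝ) else 0) with hPdef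
  have hPt : Pᵀ = P := by rw [hPdef, diagonal_transpose]
  have e1 : star U * A = diagonal d * star U := by
    rw [hspec, ← Matrix.mul_assoc, ← Matrix.mul_assoc, h2, Matrix.one_mul]
  have hPfix : ∀ y : n → ℝ, A.mulVec y = d i • y →
      P.mulVec ((star U).mulVec y) = (star U).mulVec y := by
    intro y hy
    set zy : n → ℝ := (star U).mulVec y with hzydef
    have key : (diagonal d).mulVec zy = d i • zy := by
      calc (diagonal d).mulVec zy = (diagonal d * star U).mulVec y := by
            rw [hzydef, mulVec_mulVec]
        _ = (star U * A).mulVec y := by rw [e1]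
        _ = (star U).mulVec (A.mulVec y) := by rw [mulVec_mulVec]
        _ = (star U).mulVec (d i • y) := by rw [hy]
        _ = d i • zy := by rw [mulVec_smul, hzydef]
    funext j
    have hj : d j * zy j = d i * zy j := by
      have := congrFun key j
      simpa [mulVec_diagonal] using this
    by_cases h : d j = d i
    · simp [hPdef, mulVec_diagonal, h]
    · have h0 : zy j = 0 := by
        by_contra hne
        exact h (mul_right_cancel₀ hne hj)
      simp [hPdef, mulVec_diagonal, h, h0]
  refine ⟨d i, U * P * star U, ⟨?_, ?_, ?_, ?_⟩, ?_⟩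
  · have hPP : P * P = P := by
      rw [hPdef, diagonal_mul_diagonal]
      refine congrArg diagonal (funext fun j => ?_)
      by_cases h : d j = d i <;> simp [h]
    calc U * P * star U * (U * P * star U)
        = U * P * (star U * U) * (P * star U) := by simp only [Matrix.mul_assoc]
      _ = U * (P * P) * star U := by rw [h2, Matrix.mul_one]; simp only [Matrix.mul_assoc]
      _ = U * P * star U := by rw [hPP]
  · show (U * P * star U)ᵀ = U * P * star U
    have hsU : star U = Uᵀ := conjTranspose_eq_transpose_of_trivial U
    rw [hsU, Matrix.transpose_mul, Matrix.transpose_mul, Matrix.transpose_transpose, hPt]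
    simp only [Matrix.mul_assoc]
  · intro x
    have hdP : diagonal d * P = d i • P := by
      have hfun : (fun j => d j * (if d j = d i then (1:ℝ) else 0))
          = d i • (fun j => if d j = d i then (1:ℝ) else 0) := by
        funext j
        by_cases h : d j = d i <;> simp [h]
      rw [hPdef, diagonal_mul_diagonal, hfun, diagonal_smul]
    have hAE : A * (U * P * star U) = d i • (U * P * star U) := by
      have step : A * (U * P * star U) = U * (diagonal d * P) * star U := by
        rw [hspec]
        calc U * diagonal d * star U * (U * P * star U)
            = U * diagonal d * ((star U * U) * (P * star U)) := by
              simp only [Matrix.mul_assoc]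
          _ = U * (diagonal d * P) * star U := by
              rw [h2, Matrix.one_mul]; simp only [Matrix.mul_assoc]
      rw [step, hdP, Matrix.mul_smul, Matrix.smul_mul]
    rw [mulVec_mulVec, hAE, smul_mulVec]
  · intro y hy
    have hfix := hPfix y hy
    calc (U * P * star U).mulVec y = U.mulVec (P.mulVec ((star U).mulVec y)) := by
          rw [mulVec_mulVec, mulVec_mulVec]
      _ = U.mulVec ((star U).mulVec y) := by rw [hfix]
      _ = y := by rw [mulVec_mulVec, h1, one_mulVec]
  · intro h0
    have hcomm : star U * (U * P * star U) = P * star U := by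
      calc star U * (U * P * star U) = (star U * U) * (P * star U) := by
            simp only [Matrix.mul_assoc]
        _ = P * star U := by rw [h2, Matrix.one_mul]
    have key : (star U).mulVec ((U * P * star U).mulVec w) = P.mulVec z := by
      rw [mulVec_mulVec, hcomm, hzdef, mulVec_mulVec]
    rw [h0, mulVec_zero] at key
    have := congrFun key i
    simp [hPdef, mulVec_diagonal] at this
    exact hzi this.symm

section perm

variable {n : Type*} [Fintype n] [DecidableEq n]

lemma ext_mulVec {M N : Matrix n n ℝ} (h : ∀ x, M.mulVec x = N.mulVec x) : M = N := by
  ext i j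
  have := congrFun (h (Pi.single j 1)) i
  simpa [Matrix.mulVec_single] using this

def permMat (σ : Equiv.Perm n) : Matrix n n ℝ :=
  Matrix.of fun i j => if σ j = i then 1 else 0

lemma permMat_mulVec (σ : Equiv.Perm n) (x : n → ℝ) :
    (permMat σ).mulVec x = fun i => x (σ⁻¹ i) := by
  funext i
  simp only [permMat, Matrix.mulVec, dotProduct, Matrix.of_apply, ite_mul, one_mul,
    zero_mul]
  rw [Finset.sum_eq_single (σ⁻¹ i)]
  · simp
  · intro b _ hb
    rw [if_neg]
    intro h
    exact hb (by rw [← h]; simp)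
  · intro h
    exact absurd (Finset.mem_univ _) h

lemma permMat_transpose (σ : Equiv.Perm n) : (permMat σ)ᵀ = permMat σ⁻¹ := by
  ext i j
  simp only [permMat, Matrix.transpose_apply, Matrix.of_apply]
  by_cases h : σ i = j
  · rw [if_pos h, if_pos (by rw [← h]; simp)]
  · rw [if_neg h, if_neg (fun hh => h (by rw [← hh]; simp))]

lemma permMat_single (σ : Equiv.Perm n) (g : n) :
    (permMat σ).mulVec (Pi.single g 1) = Pi.single (σ g) 1 := by
  rw [permMat_mulVec]
  funext i
  by_cases h : i = σ g
  · simp [h, Pi.single_apply]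
  · have h2 : σ.symm i ≠ g := fun hh => h (by rw [← hh]; simp)
    simp [Pi.single_apply, h, h2]

lemma permMat_comm {A : Matrix n n ℝ} (σ : Equiv.Perm n)
    (hσ : ∀ a b, A (σ a) (σ b) = A a b) : A * permMat σ = permMat σ * A := by
  ext i j
  simp only [Matrix.mul_apply, permMat, Matrix.of_apply, mul_ite, mul_one, mul_zero, ite_mul,
    one_mul, zero_mul]
  have l : (∑ k, if σ j = k then A i k else 0) = A i (σ j) := by
    rw [Finset.sum_eq_single (σ j)]
    · simp
    · intro b _ hb; rw [if_neg (fun h => hb h.symm)]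
    · intro h; exact absurd (Finset.mem_univ _) h
  have r : (∑ k, if σ k = i then A k j else 0) = A (σ⁻¹ i) j := by
    rw [Finset.sum_eq_single (σ⁻¹ i)]
    · simp
    · intro b _ hb; rw [if_neg (fun h => hb (by rw [← h]; simp))]
    · intro h; exact absurd (Finset.mem_univ _) h
  rw [l, r]
  have := hσ (σ⁻¹ i) j
  simpa using this

lemma eigenProjection_comm {A : Matrix n n ℝ} {μ : ℝ} {E : Matrix n n ℝ}
    (hE : IsEigenProjection A μ E) (σ : Equiv.Perm n)
    (hσ : ∀ a b, A (σ a) (σ b) = A a b) : E * permMat σ = permMat σ * E := by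
  obtain ⟨hidem, hsymm, hmv, hfix⟩ := hE
  have hsymm' : Eᵀ = E := hsymm
  have step : ∀ τ : Equiv.Perm n, A * permMat τ = permMat τ * A →
      E * (permMat τ * E) = permMat τ * E := by
    intro τ hc
    apply ext_mulVec
    intro x
    rw [← mulVec_mulVec]
    apply hfix
    calc A.mulVec ((permMat τ * E).mulVec x)
        = (A * (permMat τ * E)).mulVec x := by rw [mulVec_mulVec]
      _ = ((permMat τ) * (A * E)).mulVec x := by
          rw [← Matrix.mul_assoc, hc, Matrix.mul_assoc]
      _ = (permMat τ).mulVec (A.mulVec (E.mulVec x)) := by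
          rw [← mulVec_mulVec, ← mulVec_mulVec]
      _ = (permMat τ).mulVec (μ • E.mulVec x) := by rw [hmv]
      _ = μ • (permMat τ * E).mulVec x := by rw [mulVec_smul, ← mulVec_mulVec]
  have hσ' : ∀ a b, A (σ⁻¹ a) (σ⁻¹ b) = A a b := by
    intro a b
    have := hσ (σ⁻¹ a) (σ⁻¹ b)
    simp only [Equiv.Perm.inv_def, Equiv.apply_symm_apply] at this
    exact this.symm
  have h1 := step σ (permMat_comm σ hσ)
  have h2 := step σ⁻¹ (permMat_comm σ⁻¹ hσ')
  have h3 := congrArg Matrix.transpose h2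
  rw [Matrix.transpose_mul, Matrix.transpose_mul, permMat_transpose, inv_inv, hsymm'] at h3
  calc E * permMat σ = E * permMat σ * E := h3.symm
    _ = E * (permMat σ * E) := by rw [Matrix.mul_assoc]
    _ = permMat σ * E := h1

end perm


theorem stmt6 {G : Type*} [Group G] [Fintype G] [DecidableEq G] [IsSimpleGroup G]
    (hna : ∃ a b : G, a * b ≠ b * a) (C : Finset G)
    (h1 : (1 : G) ∉ C) (hinv : ∀ c ∈ C, c⁻¹ ∈ C)
    (hnorm : ∀ x : G, ∀ c ∈ C, x⁻¹ * c * x ∈ C) :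
    ¬ ∃ u v : G, u ≠ v ∧ StronglyCospectral (cayleyAdj C) u v := by
  rintro ⟨u, v, huv, hsc⟩
  classical
  set A : Matrix G G ℝ := cayleyAdj C with hAdef
  have hherm : A.IsHermitian := by
    show Aᴴ = A
    ext i j
    simp only [conjTranspose_apply, star_trivial, hAdef, cayleyAdj, of_apply]
    refine if_congr ?_ rfl rfl
    constructor
    · intro hc
      have := hinv _ hc
      simpa [_root_.mul_inv_rev] using this
    · intro hc
      have := hinv _ hc
      simpa [_root_.mul_inv_rev] using this
  have hauto : ∀ σ : Equiv.Perm G, (∀ g h : G, (σ h) * (σ g)⁻¹ ∈ C ↔ h * g⁻¹ ∈ C) →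
      ∀ a b, A (σ a) (σ b) = A a b := by
    intro σ hσ a b
    simp only [hAdef, cayleyAdj, of_apply]
    exact if_congr (hσ a b) rfl rfl
  -- right translation by u⁻¹
  set τ : Equiv.Perm G := Equiv.mulRight u⁻¹ with hτdef
  have hτA : ∀ a b, A (τ a) (τ b) = A a b := by
    refine hauto τ (fun g h => ?_)
    have : (τ h) * (τ g)⁻¹ = h * g⁻¹ := by
      simp only [hτdef, Equiv.coe_mulRight]
      group
    rw [this]
  set a : G := v * u⁻¹ with hadef
  have ha1 : a ≠ 1 := by
    intro h
    exact huv (mul_inv_eq_one.mp h).symm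
  have main : ∀ x : G, x⁻¹ * a * x = a := by
    intro x
    set σ : Equiv.Perm G :=
      ⟨fun g => x⁻¹ * g * x, fun g => x * g * x⁻¹,
        fun g => by group, fun g => by group⟩ with hσdef
    have hσA : ∀ p q, A (σ p) (σ q) = A p q := by
      refine hauto σ (fun g h => ?_)
      have hrw : (σ h) * (σ g)⁻¹ = x⁻¹ * (h * g⁻¹) * x := by
        simp only [hσdef, Equiv.coe_fn_mk]
        group
      rw [hrw]
      constructor
      · intro hc
        have := hnorm x⁻¹ _ hc
        have e : (x⁻¹)⁻¹ * (x⁻¹ * (h * g⁻¹) * x) * x⁻¹ = h * g⁻¹ := by group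
        rwa [e] at this
      · intro hc
        exact hnorm x _ hc
    have hE : ∀ μ E, IsEigenProjection A μ E →
        E.mulVec (Pi.single (σ a) 1) = E.mulVec (Pi.single a 1) := by
      intro μ E hEP
      have hcσ := eigenProjection_comm hEP σ hσA
      have hcτ := eigenProjection_comm hEP τ hτA
      have commτ : ∀ s : G → ℝ,
          E.mulVec ((permMat τ).mulVec s) = (permMat τ).mulVec (E.mulVec s) := by
        intro s
        rw [mulVec_mulVec, mulVec_mulVec, hcτ]
      have commσ : ∀ s : G → ℝ,
          E.mulVec ((permMat σ).mulVec s) = (permMat σ).mulVec (E.mulVec s) := by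
        intro s
        rw [mulVec_mulVec, mulVec_mulVec, hcσ]
      have hu : (permMat τ).mulVec (Pi.single u 1) = Pi.single (1:G) 1 := by
        rw [permMat_single]
        congr 1
        simp [hτdef]
      have hv : (permMat τ).mulVec (Pi.single v 1) = Pi.single a 1 := by
        rw [permMat_single]
        congr 1
      have hσ1 : σ (1:G) = 1 := by
        simp [hσdef]
      have h1a : E.mulVec (Pi.single (1:G) 1) = E.mulVec (Pi.single a 1) ∨
          E.mulVec (Pi.single (1:G) 1) = -E.mulVec (Pi.single a 1) := by
        rcases hsc μ E hEP with h | h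
        · left
          calc E.mulVec (Pi.single (1:G) 1)
              = E.mulVec ((permMat τ).mulVec (Pi.single u 1)) := by rw [hu]
            _ = (permMat τ).mulVec (E.mulVec (Pi.single u 1)) := commτ _
            _ = (permMat τ).mulVec (E.mulVec (Pi.single v 1)) := by rw [h]
            _ = E.mulVec ((permMat τ).mulVec (Pi.single v 1)) := (commτ _).symm
            _ = E.mulVec (Pi.single a 1) := by rw [hv]
        · right
          calc E.mulVec (Pi.single (1:G) 1)
              = E.mulVec ((permMat τ).mulVec (Pi.single u 1)) := by rw [hu]
            _ = (permMat τ).mulVec (E.mulVec (Pi.single u 1)) := commτ _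
            _ = (permMat τ).mulVec (-E.mulVec (Pi.single v 1)) := by rw [h]
            _ = -(permMat τ).mulVec (E.mulVec (Pi.single v 1)) := by rw [mulVec_neg]
            _ = -E.mulVec ((permMat τ).mulVec (Pi.single v 1)) := by rw [commτ _]
            _ = -E.mulVec (Pi.single a 1) := by rw [hv]
      rcases h1a with h | h
      · calc E.mulVec (Pi.single (σ a) 1)
            = E.mulVec ((permMat σ).mulVec (Pi.single a 1)) := by rw [permMat_single]
          _ = (permMat σ).mulVec (E.mulVec (Pi.single a 1)) := commσ _
          _ = (permMat σ).mulVec (E.mulVec (Pi.single (1:G) 1)) := by rw [← h]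
          _ = E.mulVec ((permMat σ).mulVec (Pi.single (1:G) 1)) := (commσ _).symm
          _ = E.mulVec (Pi.single (1:G) 1) := by rw [permMat_single, hσ1]
          _ = E.mulVec (Pi.single a 1) := h
      · have h' : E.mulVec (Pi.single a 1) = -E.mulVec (Pi.single (1:G) 1) := by
          rw [h, neg_neg]
        calc E.mulVec (Pi.single (σ a) 1)
            = E.mulVec ((permMat σ).mulVec (Pi.single a 1)) := by rw [permMat_single]
          _ = (permMat σ).mulVec (E.mulVec (Pi.single a 1)) := commσ _
          _ = (permMat σ).mulVec (-E.mulVec (Pi.single (1:G) 1)) := by rw [← h']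
          _ = -(permMat σ).mulVec (E.mulVec (Pi.single (1:G) 1)) := by rw [mulVec_neg]
          _ = -E.mulVec ((permMat σ).mulVec (Pi.single (1:G) 1)) := by rw [commσ _]
          _ = -E.mulVec (Pi.single (1:G) 1) := by rw [permMat_single, hσ1]
          _ = E.mulVec (Pi.single a 1) := h'.symm
    by_contra hne
    have hσa : σ a ≠ a := hne
    set w : G → ℝ := Pi.single (σ a) 1 - Pi.single a 1 with hwdef
    have hw : w ≠ 0 := by
      intro h
      have := congrFun h (σ a)
      simp [hwdef, Pi.single_apply, hσa] at this
    obtain ⟨μ, E, hEP, hEw⟩ := exists_eigenProjection_ne_zero hherm hw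
    apply hEw
    rw [hwdef, mulVec_sub, hE μ E hEP, sub_self]
  have hcenter : a ∈ Subgroup.center G := by
    refine Subgroup.mem_center_iff.mpr (fun g => ?_)
    have hm := main g
    have e : a * g = g * (g⁻¹ * a * g) := by group
    rw [hm] at e
    exact e.symm
  rcases (inferInstance : (Subgroup.center G).Normal).eq_bot_or_eq_top with hbot | htop
  · exact ha1 (by rwa [hbot, Subgroup.mem_bot] at hcenter)
  · obtain ⟨p, q, hpq⟩ := hna
    apply hpq
    have hq : q ∈ Subgroup.center G := htop ▸ Subgroup.mem_top q
    exact Subgroup.mem_center_iff.mp hq p
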